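/- Fix L > 0, s ∈ ℤ', and σ : ℤ' → [0,1] with Σ_{l<0} σ(l) < ∞. If Y and Ỹ both solve the discrete Riemann–Hilbert problem with data W (conditions (a), (b), (c) below), then Y(z) = Ỹ(z) for all z ∈ ℂ \ ℤ'. -/

import Mathlib

open scoped Topology

/-!
Half-integers `ℤ' = ℤ + 1/2` are parametrized by `ℤ`: the half-integer `a = m + 1/2`
corresponds to `m : ℤ`; `σ : ℤ' → [0,1]` is represented as `σ : ℤ → ℝ` and `s = t + 1/2` by
`t : ℤ`.  Thus `σ(a - s - 1/2)` reads `σ (m - t - 1)`, `J_{a-1/2} = J_m`, `J_{a+1/2} = J_{m+1}`,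
and `K^Be(a,a) = ∑_{j≥0} J_{m+j+1}(2L)²`.  Holomorphy, analyticity and the decay condition for
matrix-valued functions are expressed entrywise (any matrix norm gives an equivalent
formulation).
-/
noncomputable def besselJnat (L : ℝ) (n : ℕ) : ℝ :=
  ∑' j : ℕ, (-1 : ℝ) ^ j * L ^ (2 * j + n) / (Nat.factorial j * Nat.factorial (n + j))

noncomputable def besselJint (L : ℝ) (n : ℤ) : ℝ :=
  if 0 ≤ n then besselJnat L n.toNat else (-1 : ℝ) ^ (-n).toNat * besselJnat L (-n).toNat

/-- Diagonal of the discrete Bessel kernel, `K^Be(m + 1/2, m + 1/2)`. -/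
noncomputable def KBeDiag (L : ℝ) (m : ℤ) : ℝ :=
  ∑' j : ℕ, besselJint L (m + j + 1) * besselJint L (m + j + 1)

/-- `f(a) = √σ(a-s-1/2) (J_{a-1/2}(2L), L J_{a+1/2}(2L))ᵀ` for `a = m + 1/2`. -/
noncomputable def fvec (σ : ℤ → ℝ) (L : ℝ) (t m : ℤ) : Fin 2 → ℝ :=
  ![Real.sqrt (σ (m - t - 1)) * besselJint L m,
    Real.sqrt (σ (m - t - 1)) * (L * besselJint L (m + 1))]

/-- `g(a) = √σ(a-s-1/2) (L J_{a+1/2}(2L), -J_{a-1/2}(2L))ᵀ` for `a = m + 1/2`. -/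
noncomputable def gvec (σ : ℤ → ℝ) (L : ℝ) (t m : ℤ) : Fin 2 → ℝ :=
  ![Real.sqrt (σ (m - t - 1)) * (L * besselJint L (m + 1)),
    Real.sqrt (σ (m - t - 1)) * (-besselJint L m)]

/-- `W(a) = f(a) g(a)ᵀ / (1 - σ(a-s-1/2) K^Be(a,a))` for `a = m + 1/2`. -/
noncomputable def Wmat (σ : ℤ → ℝ) (L : ℝ) (t m : ℤ) : Matrix (Fin 2) (Fin 2) ℂ :=
  fun i j => ((fvec σ L t m i * gvec σ L t m j / (1 - σ (m - t - 1) * KBeDiag L m) : ℝ) : ℂ)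

/-- `Y` solves the discrete Riemann–Hilbert problem with data `W`:
(a) `Y` is holomorphic on `ℂ \ ℤ'`;
(b) for every `a ∈ ℤ'`, `z ↦ Y(z)(I - W(a)/(z-a))` extends holomorphically near `a`;
(c) `sup_{|z|=n} |Y(z) - I| → 0` as `n → ∞` through positive integers. -/
def SolvesRH (W : ℤ → Matrix (Fin 2) (Fin 2) ℂ) (Y : ℂ → Matrix (Fin 2) (Fin 2) ℂ) : Prop :=
  (∀ i j, DifferentiableOn ℂ (fun z => Y z i j) {z : ℂ | ∀ m : ℤ, z ≠ (m : ℂ) + 1 / 2}) ∧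
  (∀ m : ℤ, ∃ h : ℂ → Matrix (Fin 2) (Fin 2) ℂ,
      (∀ i j, AnalyticAt ℂ (fun z => h z i j) ((m : ℂ) + 1 / 2)) ∧
      ∀ᶠ z in 𝓝[≠] ((m : ℂ) + 1 / 2),
        h z = Y z * (1 - (z - ((m : ℂ) + 1 / 2))⁻¹ • W m)) ∧
  (∀ ε : ℝ, 0 < ε → ∃ N : ℕ, 0 < N ∧ ∀ n : ℕ, N ≤ n → ∀ z : ℂ, ‖z‖ = n →
      ∀ i j, ‖(Y z - 1) i j‖ < ε)

open Topology

lemma floor_half_re (m : ℤ) : ⌊((m : ℂ) + 1/2).re⌋ = m := by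
  have : ((m : ℂ) + 1/2).re = (m : ℝ) + 1/2 := by simp
  rw [this]
  rw [Int.floor_eq_iff]
  constructor <;> norm_num

lemma sphere_avoids (n : ℕ) (z : ℂ) (hz : ‖z‖ = n) (m : ℤ) :
    z ≠ (m : ℂ) + 1/2 := by
  rintro rfl
  have h1 : ((m : ℂ) + 1/2) = (((m : ℝ) + 1/2 : ℝ) : ℂ) := by push_cast; ring
  rw [h1, Complex.norm_real, Real.norm_eq_abs] at hz
  rcases abs_eq (by positivity : (0:ℝ) ≤ (n:ℝ)) |>.mp hz with h | h
  · have : (2*m + 1 : ℝ) = (2*n : ℕ) := by push_cast; linarith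
    have : (2*m + 1 : ℤ) = (2*n : ℕ) := by exact_mod_cast this
    omega
  · have : (2*m + 1 : ℝ) = -(2*(n:ℤ) : ℤ) := by push_cast; linarith
    have : (2*m + 1 : ℤ) = -(2*(n:ℤ)) := by exact_mod_cast this
    omega

lemma isOpen_S : IsOpen {z : ℂ | ∀ m : ℤ, z ≠ (m : ℂ) + 1/2} := by
  have hc : IsClosed (Set.range (fun m : ℤ => (m : ℂ) + 1/2)) := by
    have h1 : IsClosedEmbedding (fun m : ℤ => ((m : ℝ) : ℂ) + 1/2) := by
      exact (Homeomorph.addRight (1/2 : ℂ)).isClosedEmbedding.comp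
        (Complex.isometry_ofReal.isClosedEmbedding.comp Int.isClosedEmbedding_coe_real)
    exact h1.isClosed_range
  have : {z : ℂ | ∀ m : ℤ, z ≠ (m : ℂ) + 1/2} = (Set.range (fun m : ℤ => (m : ℂ) + 1/2))ᶜ := by
    ext z; simp [Set.mem_range, eq_comm]
  rw [this]
  exact hc.isOpen_compl

lemma ball_half_subset (m : ℤ) (z : ℂ) (hz : z ∈ Metric.ball ((m:ℂ)+1/2) (1/2))
    (hne : z ≠ (m:ℂ)+1/2) : ∀ m' : ℤ, z ≠ (m':ℂ)+1/2 := by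
  rintro m' rfl
  rcases eq_or_ne m' m with rfl | h
  · exact hne rfl
  · rw [Metric.mem_ball, Complex.dist_eq] at hz
    have : ((m':ℂ)+1/2) - ((m:ℂ)+1/2) = ((m' - m : ℤ) : ℂ) := by push_cast; ring
    rw [this] at hz
    rw [Complex.norm_intCast] at hz
    have : (1:ℝ) ≤ |((m' - m : ℤ) : ℝ)| := by
      rw [← Int.cast_abs]
      exact_mod_cast Int.one_le_abs (by omega)
    linarith

/-- Core uniqueness principle: a function holomorphic off the half-integers, with analytic
extensions across each half-integer and approaching `c` on large circles, equals `c`. -/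
lemma RHcore (u : ℂ → ℂ) (c : ℂ)
    (hdiff : DifferentiableOn ℂ u {z : ℂ | ∀ m : ℤ, z ≠ (m : ℂ) + 1/2})
    (hjump : ∀ m : ℤ, ∃ g : ℂ → ℂ, AnalyticAt ℂ g ((m : ℂ) + 1/2) ∧
      ∀ᶠ z in 𝓝[≠] ((m : ℂ) + 1/2), u z = g z)
    (hbound : ∀ ε : ℝ, 0 < ε → ∃ N : ℕ, 0 < N ∧ ∀ n : ℕ, N ≤ n → ∀ z : ℂ,
      ‖z‖ = n → ‖u z - c‖ < ε) :
    ∀ z : ℂ, (∀ m : ℤ, z ≠ (m : ℂ) + 1/2) → u z = c := by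
  classical
  set S := {z : ℂ | ∀ m : ℤ, z ≠ (m : ℂ) + 1/2} with hS
  set v : ℂ → ℂ := fun z =>
    if z ∈ S then u z else Classical.choose (hjump ⌊z.re⌋) z with hv
  -- v agrees with u on S
  have hvS : ∀ z ∈ S, v z = u z := fun z hz => by simp [hv, hz]
  -- v is entire
  have hventire : Differentiable ℂ v := by
    intro z
    by_cases hz : z ∈ S
    · have h1 : DifferentiableAt ℂ u z :=
        (hdiff z hz).differentiableAt (isOpen_S.mem_nhds hz)
      refine h1.congr_of_eventuallyEq ?_
      filter_upwards [isOpen_S.mem_nhds hz] with w hw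
      exact hvS w hw
    · -- z = m + 1/2 for some m
      simp only [hS, Set.mem_setOf_eq, not_forall, not_ne_iff] at hz
      obtain ⟨m, rfl⟩ := hz
      obtain ⟨hg, hev⟩ := Classical.choose_spec (hjump m)
      set g := Classical.choose (hjump m) with hgdef
      have hfloor : ⌊((m : ℂ) + 1/2).re⌋ = m := floor_half_re m
      have hvz : v ((m:ℂ)+1/2) = g ((m:ℂ)+1/2) := by
        have : ¬ ((m:ℂ)+1/2 ∈ S) := by
          simp only [hS, Set.mem_setOf_eq, not_forall, not_ne_iff]; exact ⟨m, rfl⟩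
        have h3 : v ((m:ℂ)+1/2) = Classical.choose (hjump ⌊((m:ℂ)+1/2).re⌋) ((m:ℂ)+1/2) := by
          simp only [hv, this, if_false]
        rw [h3]
        rw [hfloor]
      -- eventually equal to g near the point
      have hevv : v =ᶠ[𝓝 ((m:ℂ)+1/2)] g := by
        have h2 : ∀ᶠ w in 𝓝[≠] ((m:ℂ)+1/2), v w = g w := by
          have hball : ∀ᶠ w in 𝓝[≠] ((m:ℂ)+1/2), w ∈ Metric.ball ((m:ℂ)+1/2) (1/2) :=
            eventually_nhdsWithin_of_eventually_nhds
              (Metric.ball_mem_nhds _ (by norm_num))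
          filter_upwards [hev, hball, self_mem_nhdsWithin] with w hw hwball hwne
          have hwS : w ∈ S := ball_half_subset m w hwball hwne
          rw [hvS w hwS, hw]
        rw [← nhdsNE_sup_pure ((m:ℂ)+1/2)]
        rw [Filter.EventuallyEq, Filter.eventually_sup]
        exact ⟨h2, by simpa [Filter.EventuallyEq] using hvz⟩
      exact (hg.congr hevv.symm).differentiableAt
  -- conclude via maximum modulus
  intro z hzS
  have key : ∀ ε : ℝ, 0 < ε → ‖u z - c‖ ≤ ε := by
    intro ε hε
    obtain ⟨N, hN, hNb⟩ := hbound ε hε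
    set n : ℕ := max N (⌊‖z‖⌋₊ + 1) with hn
    have hnN : N ≤ n := le_max_left _ _
    have hzlt : ‖z‖ < n := by
      calc ‖z‖ < ⌊‖z‖⌋₊ + 1 := Nat.lt_floor_add_one _
        _ ≤ n := by exact_mod_cast le_max_right _ _
    have hnpos : (0:ℝ) < n := lt_of_le_of_lt (norm_nonneg z) hzlt
    have hfr : frontier (Metric.ball (0:ℂ) (n:ℝ)) = Metric.sphere 0 (n:ℝ) :=
      frontier_ball 0 (ne_of_gt hnpos)
    have hmax : ‖v z - c‖ ≤ ε := by
      refine Complex.norm_le_of_forall_mem_frontier_norm_le (U := Metric.ball (0:ℂ) (n:ℝ))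
        Metric.isBounded_ball ((hventire.sub_const c).diffContOnCl) ?_ ?_
      · intro w hw
        rw [hfr, Metric.mem_sphere, Complex.dist_eq, sub_zero] at hw
        have hwS : w ∈ S := fun m' => sphere_avoids n w hw m'
        rw [hvS w hwS]
        exact le_of_lt (hNb n hnN w hw)
      · exact subset_closure (Metric.mem_ball.mpr (by rwa [Complex.dist_eq, sub_zero]))
    rwa [hvS z hzS] at hmax
  have : ‖u z - c‖ ≤ 0 := by
    by_contra h
    push_neg at h
    have := key (‖u z - c‖ / 2) (by linarith)
    linarith
  have : u z - c = 0 := by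
    have := le_antisymm this (norm_nonneg _)
    exact norm_eq_zero.mp this
  exact sub_eq_zero.mp this

lemma Wmat_key1 (σ : ℤ → ℝ) (L : ℝ) (t m : ℤ) :
    Wmat σ L t m 0 0 + Wmat σ L t m 1 1 = 0 := by
  simp only [Wmat, fvec, gvec, Matrix.cons_val_zero, Matrix.cons_val_one, Matrix.head_cons]
  rw [← Complex.ofReal_add, Complex.ofReal_eq_zero, ← add_div, div_eq_zero_iff]
  left; ring

lemma Wmat_key2 (σ : ℤ → ℝ) (L : ℝ) (t m : ℤ) :
    Wmat σ L t m 0 0 * Wmat σ L t m 1 1 - Wmat σ L t m 0 1 * Wmat σ L t m 1 0 = 0 := by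
  simp only [Wmat, fvec, gvec, Matrix.cons_val_zero, Matrix.cons_val_one, Matrix.head_cons]
  rw [← Complex.ofReal_mul, ← Complex.ofReal_mul, ← Complex.ofReal_sub, Complex.ofReal_eq_zero,
    div_mul_div_comm, div_mul_div_comm, ← sub_div, div_eq_zero_iff]
  left; ring

lemma det_one_sub_smul (σ : ℤ → ℝ) (L : ℝ) (t m : ℤ) (c : ℂ) :
    Matrix.det (1 - c • Wmat σ L t m) = 1 := by
  have k1 := Wmat_key1 σ L t m
  have k2 := Wmat_key2 σ L t m
  simp only [Matrix.det_fin_two, Matrix.sub_apply, Matrix.smul_apply, Matrix.one_apply,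
    smul_eq_mul]
  norm_num
  linear_combination (-c) * k1 + c^2 * k2

lemma mul_entry (A B : Matrix (Fin 2) (Fin 2) ℂ) (i j : Fin 2) :
    (A * B) i j = A i 0 * B 0 j + A i 1 * B 1 j := by
  simp [Matrix.mul_apply, Fin.sum_univ_two]

lemma adj_sub_one (B : Matrix (Fin 2) (Fin 2) ℂ) (i j : Fin 2) :
    ∃ k l : Fin 2, ‖(Matrix.adjugate B - 1) i j‖ = ‖(B - 1) k l‖ := by
  fin_cases i <;> fin_cases j
  · exact ⟨1, 1, by simp [Matrix.adjugate_fin_two, Matrix.sub_apply, Matrix.one_apply]⟩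
  · refine ⟨0, 1, ?_⟩
    simp only [Matrix.adjugate_fin_two, Matrix.sub_apply, Matrix.one_apply]
    norm_num
  · refine ⟨1, 0, ?_⟩
    simp only [Matrix.adjugate_fin_two, Matrix.sub_apply, Matrix.one_apply]
    norm_num
  · exact ⟨0, 0, by simp [Matrix.adjugate_fin_two, Matrix.sub_apply, Matrix.one_apply]⟩

lemma diffOn_adj_entry {B : ℂ → Matrix (Fin 2) (Fin 2) ℂ} {S : Set ℂ}
    (hB : ∀ i j, DifferentiableOn ℂ (fun z => B z i j) S) (i j : Fin 2) :
    DifferentiableOn ℂ (fun z => Matrix.adjugate (B z) i j) S := by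
  fin_cases i <;> fin_cases j <;> simp only [Matrix.adjugate_fin_two] <;>
    first
      | simpa using hB 1 1
      | simpa using (hB 0 1).neg
      | simpa using (hB 1 0).neg
      | simpa using hB 0 0

lemma analytic_adj_entry {B : ℂ → Matrix (Fin 2) (Fin 2) ℂ} {x : ℂ}
    (hB : ∀ i j, AnalyticAt ℂ (fun z => B z i j) x) (i j : Fin 2) :
    AnalyticAt ℂ (fun z => Matrix.adjugate (B z) i j) x := by
  fin_cases i <;> fin_cases j <;> simp only [Matrix.adjugate_fin_two] <;>
    first
      | simpa using hB 1 1
      | exact (hB 0 1).neg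
      | exact (hB 1 0).neg
      | simpa using hB 0 0

theorem discreteRH_uniqueness (σ : ℤ → ℝ) (hσ : ∀ k : ℤ, σ k ∈ Set.Icc (0 : ℝ) 1)
    (hsum : Summable (fun k : {k : ℤ // k < 0} => σ k)) (L : ℝ) (hL : 0 < L) (t : ℤ)
    (Y Y' : ℂ → Matrix (Fin 2) (Fin 2) ℂ)
    (hY : SolvesRH (Wmat σ L t) Y) (hY' : SolvesRH (Wmat σ L t) Y') :
    ∀ z : ℂ, (∀ m : ℤ, z ≠ (m : ℂ) + 1 / 2) → Y z = Y' z := by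
  obtain ⟨hY1, hY2, hY3⟩ := hY
  obtain ⟨hY1', hY2', hY3'⟩ := hY'
  -- Step 1: det Y' = 1 off the half-integers
  have hdet : ∀ w : ℂ, (∀ m : ℤ, w ≠ (m : ℂ) + 1/2) → Matrix.det (Y' w) = 1 := by
    refine RHcore (fun w => Matrix.det (Y' w)) 1 ?_ ?_ ?_
    · have he : (fun w => Matrix.det (Y' w)) =
          fun w => Y' w 0 0 * Y' w 1 1 - Y' w 0 1 * Y' w 1 0 := by
        funext w; rw [Matrix.det_fin_two]
      rw [he]
      exact ((hY1' 0 0).mul (hY1' 1 1)).sub ((hY1' 0 1).mul (hY1' 1 0))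
    · intro m
      obtain ⟨h', hana, hev⟩ := hY2' m
      refine ⟨fun w => Matrix.det (h' w), ?_, ?_⟩
      · have he : (fun w => Matrix.det (h' w)) =
            fun w => h' w 0 0 * h' w 1 1 - h' w 0 1 * h' w 1 0 := by
          funext w; rw [Matrix.det_fin_two]
        rw [he]
        exact ((hana 0 0).mul (hana 1 1)).sub ((hana 0 1).mul (hana 1 0))
      · filter_upwards [hev] with w hw
        rw [hw, Matrix.det_mul, det_one_sub_smul, mul_one]
    · intro ε hε
      have hδpos : (0:ℝ) < min 1 (ε/5) := lt_min one_pos (by linarith)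
      obtain ⟨N, hN, hNb⟩ := hY3' (min 1 (ε/5)) hδpos
      refine ⟨N, hN, ?_⟩
      intro n hn w hw
      set δ := min 1 (ε/5) with hδ
      have hδ1 : δ ≤ 1 := min_le_left _ _
      have hδε : δ ≤ ε/5 := min_le_right _ _
      have hE : ∀ i j, ‖(Y' w - 1) i j‖ < δ := hNb n hn w hw
      have hid : Matrix.det (Y' w) - 1 =
          (Y' w - 1) 0 0 + (Y' w - 1) 1 1 + (Y' w - 1) 0 0 * (Y' w - 1) 1 1
            - (Y' w - 1) 0 1 * (Y' w - 1) 1 0 := by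
        simp only [Matrix.det_fin_two, Matrix.sub_apply, Matrix.one_apply]
        norm_num
        ring
      rw [hid]
      set A := (Y' w - 1) 0 0
      set B := (Y' w - 1) 1 1
      set C := (Y' w - 1) 0 1
      set D := (Y' w - 1) 1 0
      have habs : ‖A + B + A * B - C * D‖ ≤
          ‖A‖ + ‖B‖ + ‖A‖ * ‖B‖
            + ‖C‖ * ‖D‖ := by
        calc ‖A + B + A * B - C * D‖
            ≤ ‖A + B + A * B‖ + ‖C * D‖ := by
              simpa [sub_eq_add_neg] using norm_add_le (A + B + A * B) (-(C * D))
          _ ≤ ‖A + B‖ + ‖A * B‖ + ‖C * D‖ := by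
              gcongr; exact norm_add_le _ _
          _ ≤ ‖A‖ + ‖B‖ + ‖A * B‖ + ‖C * D‖ := by
              gcongr; exact norm_add_le _ _
          _ = ‖A‖ + ‖B‖ + ‖A‖ * ‖B‖
                + ‖C‖ * ‖D‖ := by rw [norm_mul, norm_mul]
      have h1 := hE 0 0; have h2 := hE 1 1; have h3 := hE 0 1; have h4 := hE 1 0
      have n1 := norm_nonneg A; have n2 := norm_nonneg B
      have n3 := norm_nonneg C; have n4 := norm_nonneg D
      nlinarith [mul_le_mul (le_of_lt h1) (le_of_lt h2) n2 (le_of_lt hδpos),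
        mul_le_mul (le_of_lt h3) (le_of_lt h4) n4 (le_of_lt hδpos)]
  -- Step 2: Y * adjugate Y' = 1 off the half-integers
  have hGone : ∀ i j : Fin 2, ∀ w : ℂ, (∀ m : ℤ, w ≠ (m : ℂ) + 1/2) →
      (Y w * Matrix.adjugate (Y' w)) i j = (1 : Matrix (Fin 2) (Fin 2) ℂ) i j := by
    intro i j
    refine RHcore (fun w => (Y w * Matrix.adjugate (Y' w)) i j)
      ((1 : Matrix (Fin 2) (Fin 2) ℂ) i j) ?_ ?_ ?_
    · have he : (fun w => (Y w * Matrix.adjugate (Y' w)) i j) =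
          fun w => Y w i 0 * Matrix.adjugate (Y' w) 0 j
            + Y w i 1 * Matrix.adjugate (Y' w) 1 j := by
        funext w; rw [mul_entry]
      rw [he]
      exact ((hY1 i 0).mul (diffOn_adj_entry hY1' 0 j)).add
        ((hY1 i 1).mul (diffOn_adj_entry hY1' 1 j))
    · intro m
      obtain ⟨h, hana, hev⟩ := hY2 m
      obtain ⟨h', hana', hev'⟩ := hY2' m
      refine ⟨fun w => (h w * Matrix.adjugate (h' w)) i j, ?_, ?_⟩
      · have he : (fun w => (h w * Matrix.adjugate (h' w)) i j) =
            fun w => h w i 0 * Matrix.adjugate (h' w) 0 j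
              + h w i 1 * Matrix.adjugate (h' w) 1 j := by
          funext w; rw [mul_entry]
        rw [he]
        exact ((hana i 0).mul (analytic_adj_entry hana' 0 j)).add
          ((hana i 1).mul (analytic_adj_entry hana' 1 j))
      · filter_upwards [hev, hev'] with w hw hw'
        set M := 1 - (w - ((m : ℂ) + 1/2))⁻¹ • Wmat σ L t m with hM
        have hMadj : M * Matrix.adjugate M = 1 := by
          rw [Matrix.mul_adjugate, det_one_sub_smul, one_smul]
        have : h w * Matrix.adjugate (h' w) = Y w * Matrix.adjugate (Y' w) := by
          rw [hw, hw', Matrix.adjugate_mul_distrib, mul_assoc,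
            ← mul_assoc M (Matrix.adjugate M) (Matrix.adjugate (Y' w)), hMadj, one_mul]
        rw [this]
    · intro ε hε
      have hδpos : (0:ℝ) < min 1 (ε/5) := lt_min one_pos (by linarith)
      obtain ⟨N, hN, hNb⟩ := hY3 (min 1 (ε/5)) hδpos
      obtain ⟨N', hN', hNb'⟩ := hY3' (min 1 (ε/5)) hδpos
      refine ⟨max N N', lt_of_lt_of_le hN (le_max_left _ _), ?_⟩
      intro n hn w hw
      set δ := min 1 (ε/5) with hδ
      have hδ1 : δ ≤ 1 := min_le_left _ _
      have hδε : δ ≤ ε/5 := min_le_right _ _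
      have hEb : ∀ k l, ‖(Y w - 1) k l‖ < δ :=
        hNb n (le_trans (le_max_left _ _) hn) w hw
      have hE'b : ∀ k l, ‖(Y' w - 1) k l‖ < δ :=
        hNb' n (le_trans (le_max_right _ _) hn) w hw
      set E := Y w - 1 with hEdef
      set F := Matrix.adjugate (Y' w) - 1 with hFdef
      have hFb : ∀ k l, ‖F k l‖ < δ := by
        intro k l
        obtain ⟨k', l', hkl⟩ := adj_sub_one (Y' w) k l
        rw [hFdef, hkl]
        exact hE'b k' l'
      have hid : Y w * Matrix.adjugate (Y' w) - 1 = E + F + E * F := by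
        rw [hEdef, hFdef]; noncomm_ring
      have hentry : (Y w * Matrix.adjugate (Y' w)) i j
          - (1 : Matrix (Fin 2) (Fin 2) ℂ) i j
          = E i j + F i j + (E i 0 * F 0 j + E i 1 * F 1 j) := by
        have := congrFun (congrFun hid i) j
        simp only [Matrix.sub_apply, Matrix.add_apply] at this
        rw [this, mul_entry]
      show ‖(Y w * Matrix.adjugate (Y' w)) i j
        - (1 : Matrix (Fin 2) (Fin 2) ℂ) i j‖ < ε
      rw [hentry]
      have habs : ‖E i j + F i j + (E i 0 * F 0 j + E i 1 * F 1 j)‖ ≤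
          ‖E i j‖ + ‖F i j‖
            + (‖E i 0‖ * ‖F 0 j‖
              + ‖E i 1‖ * ‖F 1 j‖) := by
        calc ‖E i j + F i j + (E i 0 * F 0 j + E i 1 * F 1 j)‖
            ≤ ‖E i j + F i j‖ + ‖E i 0 * F 0 j + E i 1 * F 1 j‖ :=
              norm_add_le _ _
          _ ≤ ‖E i j‖ + ‖F i j‖
                + (‖E i 0 * F 0 j‖ + ‖E i 1 * F 1 j‖) := by
              gcongr <;> exact norm_add_le _ _
          _ = _ := by rw [norm_mul, norm_mul]
      have h1 := hEb i j; have h2 := hFb i j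
      have h3 := hEb i 0; have h4 := hFb 0 j; have h5 := hEb i 1; have h6 := hFb 1 j
      have n3 := norm_nonneg (F 0 j); have n4 := norm_nonneg (F 1 j)
      nlinarith [mul_le_mul (le_of_lt h3) (le_of_lt h4) n3 (le_of_lt hδpos),
        mul_le_mul (le_of_lt h5) (le_of_lt h6) n4 (le_of_lt hδpos)]
  -- Step 3: conclude
  intro z hz
  have hG : Y z * Matrix.adjugate (Y' z) = 1 := by
    ext i j; exact hGone i j z hz
  have hdz : Matrix.det (Y' z) = 1 := hdet z hz
  calc Y z = Y z * 1 := (mul_one _).symm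
    _ = Y z * (Matrix.adjugate (Y' z) * Y' z) := by
        rw [Matrix.adjugate_mul, hdz, one_smul]
    _ = (Y z * Matrix.adjugate (Y' z)) * Y' z := (mul_assoc _ _ _).symm
    _ = 1 * Y' z := by rw [hG]
    _ = Y' z := one_mul _
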